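/- For the fundamental solution G(κ,|x−y|) = e^{iκ|x−y|}/(4π|x−y|) of the Helmholtz equation, the first Gâteaux derivative at r = 0 in direction ξ of the deformed kernel (x,y) ↦ G(κ,|x+r(x)−y−r(y)|)·J_r(y) equals G(κ,|x−y|)·( ((ξ(x)−ξ(y))·(x−y)/|x−y|)·(iκ − 1/|x−y|) + div_Γ ξ(y) ) for x ≠ y. -/

import Mathlib

open Matrix

/-- Shape derivative of the deformed Helmholtz single-layer kernel:
for `x ≠ y` on `Γ`, with `J` the surface Jacobian along the deformation `tξ` at `y`
(so `J 0 = 1` and `J'(0) = div_Γ ξ(y)`), the map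
`t ↦ G(κ, |x + tξ(x) − y − tξ(y)|) · J t` is differentiable at `t = 0` with derivative
`G(κ,|x−y|) ( ((ξ(x)−ξ(y))·(x−y)/|x−y|)(iκ − 1/|x−y|) + div_Γ ξ(y) )`. -/
theorem stmt15 (κ : ℂ) (hκ : 0 ≤ κ.im) (x y ξx ξy : Fin 3 → ℝ) (hxy : x ≠ y)
    (J : ℝ → ℝ) (divξy : ℝ) (hJ0 : J 0 = 1) (hJ : HasDerivAt J divξy 0)
    (nrm : (Fin 3 → ℝ) → ℝ)
    (hnrm : ∀ v, nrm v = Real.sqrt (∑ i, v i ^ 2)) :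
    HasDerivAt
      (fun t : ℝ =>
        Complex.exp (Complex.I * κ * (nrm (x + t • ξx - (y + t • ξy)) : ℝ)) /
            ((4 * Real.pi * nrm (x + t • ξx - (y + t • ξy)) : ℝ) : ℂ) * (J t : ℂ))
      (Complex.exp (Complex.I * κ * (nrm (x - y) : ℝ)) /
          ((4 * Real.pi * nrm (x - y) : ℝ) : ℂ) *
        ((((ξx - ξy) ⬝ᵥ (x - y) / nrm (x - y) : ℝ) : ℂ) *
            (Complex.I * κ - 1 / ((nrm (x - y) : ℝ) : ℂ)) + (divξy : ℂ)))
      0 := by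
  set s : ℝ → ℝ := fun t => ∑ i, (x i - y i + t * (ξx i - ξy i)) ^ 2 with hs
  set d : ℝ := (ξx - ξy) ⬝ᵥ (x - y) with hd
  have key : ∀ t : ℝ, nrm (x + t • ξx - (y + t • ξy)) = Real.sqrt (s t) := by
    intro t
    rw [hnrm]
    congr 1
    apply Finset.sum_congr rfl
    intro i _
    simp only [Pi.add_apply, Pi.sub_apply, Pi.smul_apply, smul_eq_mul]
    ring
  have hs0 : s 0 = ∑ i, (x i - y i) ^ 2 := by
    simp [hs]
  have hn0 : nrm (x - y) = Real.sqrt (s 0) := by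
    rw [hnrm, hs0]
    simp [Pi.sub_apply]
  -- positivity of s 0
  have hex : ∃ i, x i - y i ≠ 0 := by
    by_contra h
    push_neg at h
    apply hxy
    funext i
    have := h i
    linarith [sub_eq_zero.mp this]
  obtain ⟨i0, hi0⟩ := hex
  have hs0pos : 0 < s 0 := by
    rw [hs0]
    apply Finset.sum_pos' (fun i _ => sq_nonneg _)
    exact ⟨i0, Finset.mem_univ _, by positivity⟩
  have hn0pos : 0 < Real.sqrt (s 0) := Real.sqrt_pos.mpr hs0pos
  -- derivative of s
  have hsum : HasDerivAt s (2 * d) 0 := by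
    have h1 : HasDerivAt s (∑ i, 2 * (x i - y i) * (ξx i - ξy i)) 0 := by
      apply HasDerivAt.fun_sum
      intro i _
      have h2 : HasDerivAt (fun t : ℝ => x i - y i + t * (ξx i - ξy i)) (ξx i - ξy i) 0 := by
        simpa using ((hasDerivAt_id (0 : ℝ)).mul_const (ξx i - ξy i)).const_add (x i - y i)
      have h3 := h2.pow 2
      refine h3.congr_deriv ?_
      push_cast
      ring
    convert h1 using 1
    rw [hd, dotProduct, Finset.mul_sum]
    apply Finset.sum_congr rfl
    intro i _
    simp only [Pi.sub_apply]
    ring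
  -- derivative of sqrt ∘ s
  have hn : HasDerivAt (fun t => Real.sqrt (s t)) (d / Real.sqrt (s 0)) 0 := by
    have := (Real.hasDerivAt_sqrt hs0pos.ne').comp 0 hsum
    refine this.congr_deriv ?_
    field_simp
  have hnC : HasDerivAt (fun t => ((Real.sqrt (s t) : ℝ) : ℂ)) ((d / Real.sqrt (s 0) : ℝ) : ℂ) 0 :=
    hn.ofReal_comp
  set n0 : ℝ := Real.sqrt (s 0) with hn0def
  set D : ℂ := ((d / n0 : ℝ) : ℂ) with hD
  have hexp : HasDerivAt (fun t => Complex.exp (Complex.I * κ * ((Real.sqrt (s t) : ℝ) : ℂ)))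
      (Complex.exp (Complex.I * κ * (n0 : ℂ)) * (Complex.I * κ * D)) 0 := by
    have := (hnC.const_mul (Complex.I * κ)).cexp
    simpa using this
  have hden : HasDerivAt (fun t => ((4 * Real.pi * Real.sqrt (s t) : ℝ) : ℂ))
      ((4 * Real.pi : ℝ) * D) 0 := by
    have h4 := (hn.const_mul (4 * Real.pi)).ofReal_comp
    convert h4 using 1
    rw [hD]
    push_cast
    ring
  have hdenne : ((4 * Real.pi * n0 : ℝ) : ℂ) ≠ 0 := by
    rw [Complex.ofReal_ne_zero]
    positivity
  have hJC : HasDerivAt (fun t => ((J t : ℝ) : ℂ)) (divξy : ℂ) 0 := hJ.ofReal_comp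
  have hF := ((hexp.div hden (by simpa using hdenne)).mul hJC)
  -- rewrite statement in terms of s
  simp only [key, hn0]
  refine hF.congr_deriv ?_
  symm
  rw [hJ0]
  have hn0ne : (n0 : ℂ) ≠ 0 := by
    rw [Complex.ofReal_ne_zero]; exact hn0pos.ne'
  have hπne : ((Real.pi : ℝ) : ℂ) ≠ 0 := by
    rw [Complex.ofReal_ne_zero]; exact Real.pi_ne_zero
  rw [hD]
  rw [Pi.div_apply]
  rw [← hn0def] at *
  push_cast
  field_simp [hn0ne, hπne]
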